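/- For the tandem system with finite buffers, every departure time under manufacturing blocking is less than or equal to the corresponding departure time under communication blocking (with the same arrivals, service times, and buffer capacities): D_k^{n,manuf} ≤ D_k^{n,comm} for all k, n. -/

import Mathlib

/-- Tandem system with finite buffers `B` under manufacturing blocking
(terms with nonpositive index are taken to be `0`, which is the value of all
departure times at index `0`). -/
def MfgBlock (N : ℕ) (A : ℕ → ℝ) (τ : ℕ → ℕ → ℝ) (B : ℕ → ℕ)
    (D : ℕ → ℕ → ℝ) : Prop :=
  (∀ n, D 0 n = 0) ∧
  (∀ k, D (k + 1) 1 =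
    max (max (A (k + 1)) (D k 1) + τ (k + 1) 1) (D (k + 1 - (B 2 + 1)) 2)) ∧
  (∀ k n, 2 ≤ n → n ≤ N - 1 → D (k + 1) n =
    max (max (D (k + 1) (n - 1)) (D k n) + τ (k + 1) n)
      (D (k + 1 - (B (n + 1) + 1)) (n + 1))) ∧
  (∀ k, D (k + 1) N = max (D (k + 1) (N - 1)) (D k N) + τ (k + 1) N)

/-- Tandem system with finite buffers `B` under communication blocking. -/
def CommBlock (N : ℕ) (A : ℕ → ℝ) (τ : ℕ → ℕ → ℝ) (B : ℕ → ℕ)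
    (D : ℕ → ℕ → ℝ) : Prop :=
  (∀ n, D 0 n = 0) ∧
  (∀ k, D (k + 1) 1 =
    max (max (A (k + 1)) (D k 1)) (D (k + 1 - (B 2 + 1)) 2) + τ (k + 1) 1) ∧
  (∀ k n, 2 ≤ n → n ≤ N - 1 → D (k + 1) n =
    max (max (D (k + 1) (n - 1)) (D k n)) (D (k + 1 - (B (n + 1) + 1)) (n + 1))
      + τ (k + 1) n) ∧
  (∀ k, D (k + 1) N = max (D (k + 1) (N - 1)) (D k N) + τ (k + 1) N)

/-- With the same arrivals, service times and buffer capacities, every departure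
time under manufacturing blocking is at most the one under communication
blocking. -/
lemma max_add_le_max {a a' b b' c c' t : ℝ} (ht : 0 ≤ t)
    (ha : a ≤ a') (hb : b ≤ b') (hc : c ≤ c') :
    max (max a b + t) c ≤ max (max a' b') c' + t := by
  refine max_le ?_ ?_
  · exact add_le_add_left ((max_le_max ha hb).trans (le_max_left _ _)) t
  · exact hc.trans ((le_max_right _ _).trans (le_add_of_nonneg_right ht))

theorem stmt_10 (N : ℕ) (hN : 2 ≤ N) (A : ℕ → ℝ) (τ : ℕ → ℕ → ℝ) (B : ℕ → ℕ)
    (hAmono : Monotone A) (hA0 : ∀ k, 0 ≤ A k) (hτ : ∀ k n, 0 ≤ τ k n)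
    (Dm Dc : ℕ → ℕ → ℝ)
    (hDm : MfgBlock N A τ B Dm) (hDc : CommBlock N A τ B Dc) :
    ∀ k n, 1 ≤ n → n ≤ N → Dm k n ≤ Dc k n := by
  obtain ⟨hm0, hm1, hmn, hmN⟩ := hDm
  obtain ⟨hc0, hc1, hcn, hcN⟩ := hDc
  intro k
  induction k using Nat.strong_induction_on with
  | _ k IH =>
    match k with
    | 0 => intro n _ _; rw [hm0, hc0]
    | k + 1 =>
      intro n
      induction n using Nat.strong_induction_on with
      | _ n IHn =>
        intro h1 hnN
        rcases eq_or_lt_of_le hnN with hEq | hlt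
        · rw [hEq, hmN, hcN]
          refine add_le_add_left (max_le_max ?_ ?_) _
          · exact IHn (N - 1) (by omega) (by omega) (by omega)
          · exact IH k (by omega) N (by omega) le_rfl
        · rcases eq_or_lt_of_le h1 with rfl | h2
          · rw [hm1, hc1]
            refine max_add_le_max (hτ _ _) le_rfl (IH k (by omega) 1 le_rfl (by omega)) ?_
            exact IH (k + 1 - (B 2 + 1)) (by omega) 2 (by omega) (by omega)
          · rw [hmn k n (by omega) (by omega), hcn k n (by omega) (by omega)]
            refine max_add_le_max (hτ _ _) ?_ ?_ ?_
            · exact IHn (n - 1) (by omega) (by omega) (by omega)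
            · exact IH k (by omega) n (by omega) (by omega)
            · exact IH (k + 1 - (B (n + 1) + 1)) (by omega) (n + 1) (by omega) (by omega)
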